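/- Fix σ > 0 and points a₁,…,a_N ∈ ℝ, and consider the function F(ν, τ) = (1/N) Σ_{i=1}^N KL(N(a_i, σ²) ‖ N(ν, τ²)) over ν ∈ ℝ, τ > 0. Then F is minimized at ν* = (1/N) Σ_i a_i and τ*² = σ² + (1/N) Σ_i (a_i − ν*)², i.e., for all ν ∈ ℝ, τ > 0, F(ν*, τ*) ≤ F(ν, τ). -/

import Mathlib

open scoped BigOperators

/-- Closed form of the KL divergence `KL(N(μ₁, v₁) ‖ N(μ₂, v₂))` between univariate
Gaussians with means `μ₁, μ₂` and variances `v₁, v₂`. -/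
noncomputable def klGauss (μ₁ v₁ μ₂ v₂ : ℝ) : ℝ :=
  (1 / 2) * (Real.log (v₂ / v₁) + (v₁ + (μ₁ - μ₂) ^ 2) / v₂ - 1)

/-- The Gaussian prior minimizing the average KL divergence to `N` Gaussians
`N(aᵢ, σ²)` has mean `ν* = (1/N) ∑ aᵢ` and variance `τ*² = σ² + (1/N) ∑ (aᵢ - ν*)²`. -/
theorem optimal_gaussian_prior (N : ℕ) (hN : 0 < N) (σ : ℝ) (hσ : 0 < σ)
    (a : Fin N → ℝ) :
    ∀ (ν τ : ℝ), 0 < τ →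
      (1 / (N : ℝ)) * ∑ i, klGauss (a i) (σ ^ 2)
          ((1 / (N : ℝ)) * ∑ j, a j)
          (σ ^ 2 + (1 / (N : ℝ)) * ∑ j, (a j - (1 / (N : ℝ)) * ∑ k, a k) ^ 2)
        ≤ (1 / (N : ℝ)) * ∑ i, klGauss (a i) (σ ^ 2) ν (τ ^ 2) := by
  intro ν τ hτ
  have hn : (0:ℝ) < (N:ℝ) := by exact_mod_cast hN
  have hn' : (N:ℝ) ≠ 0 := ne_of_gt hn
  set v : ℝ := σ ^ 2 with hv
  have hv0 : 0 < v := by positivity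
  set m : ℝ := (1 / (N:ℝ)) * ∑ j, a j with hm
  set s : ℝ := (1 / (N:ℝ)) * ∑ j, (a j - m) ^ 2 with hs
  have hs0 : 0 ≤ s := by
    rw [hs]; positivity
  set w : ℝ := τ ^ 2 with hw
  have hw0 : 0 < w := by positivity
  have hvs : 0 < v + s := by linarith
  -- general formula for the averaged sum
  have key : ∀ μ t : ℝ, 0 < t →
      (1 / (N:ℝ)) * ∑ i, klGauss (a i) v μ t
        = (1/2) * (Real.log (t / v) + (v + (1 / (N:ℝ)) * ∑ i, (a i - μ) ^ 2) / t - 1) := by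
    intro μ t ht
    have ht' : t ≠ 0 := ne_of_gt ht
    have expand : ∀ i : Fin N, klGauss (a i) v μ t
        = (1/2) * (Real.log (t / v) + v / t - 1) + (1 / (2 * t)) * (a i - μ) ^ 2 := by
      intro i
      unfold klGauss
      field_simp
      ring
    rw [Finset.sum_congr rfl fun i _ => expand i, Finset.sum_add_distrib,
      Finset.sum_const, Finset.card_univ, Fintype.card_fin, ← Finset.mul_sum,
      nsmul_eq_mul]
    field_simp
    ring
  -- decomposition of the second moment about ν
  have hsum0 : ∑ j, (a j - m) = 0 := by
    rw [Finset.sum_sub_distrib, Finset.sum_const, Finset.card_univ, Fintype.card_fin,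
      nsmul_eq_mul, hm]
    field_simp
    ring
  have hq : (1 / (N:ℝ)) * ∑ i, (a i - ν) ^ 2 = s + (m - ν) ^ 2 := by
    have h1 : ∀ i : Fin N, (a i - ν) ^ 2
        = (a i - m) ^ 2 + (2 * (m - ν)) * (a i - m) + (m - ν) ^ 2 := by
      intro i; ring
    rw [Finset.sum_congr rfl fun i _ => h1 i, Finset.sum_add_distrib,
      Finset.sum_add_distrib, ← Finset.mul_sum, hsum0, Finset.sum_const,
      Finset.card_univ, Fintype.card_fin, nsmul_eq_mul, hs]
    field_simp
    ring
  rw [key m (v + s) hvs, key ν w hw0, hq]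
  have hself : (v + s) / (v + s) = 1 := div_self (ne_of_gt hvs)
  rw [hself]
  have hlog : Real.log ((v + s) / w) ≤ (v + s) / w - 1 :=
    Real.log_le_sub_one_of_pos (by positivity)
  rw [Real.log_div (ne_of_gt hvs) (ne_of_gt hw0)] at hlog
  rw [Real.log_div (ne_of_gt hvs) (ne_of_gt hv0), Real.log_div (ne_of_gt hw0) (ne_of_gt hv0)]
  have hdiv : (v + s) / w ≤ (v + (s + (m - ν) ^ 2)) / w := by
    apply div_le_div_of_nonneg_right ?_ hw0.le
    nlinarith [sq_nonneg (m - ν)]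
  linarith
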